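/- For every k ∈ ℕ, the family {P_λ : λ a partition of length k} is a basis of the ℤ-module of symmetric polynomials in ℤ[x_1,…,x_k]: the P_λ are linearly independent over ℤ and every symmetric polynomial with integer coefficients in k variables is a ℤ-linear combination of them. -/

import Mathlib

open scoped BigOperators

/-- The variable `x_i` viewed inside the fraction field of `ℤ[x_1, …, x_k]`. -/
noncomputable def Xz (k : ℕ) (i : Fin k) : FractionRing (MvPolynomial (Fin k) ℤ) :=
  algebraMap (MvPolynomial (Fin k) ℤ) (FractionRing (MvPolynomial (Fin k) ℤ)) (MvPolynomial.X i)

/-- `mul(λ) = ∏_i m_i(λ)!`, where `m_i(λ)` is the number of parts of `λ` equal to `i`. -/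
def mulOf (k : ℕ) (lam : Fin k → ℕ) : ℕ :=
  ∏ i ∈ Finset.image lam Finset.univ,
    (Finset.univ.filter (fun s => lam s = i)).card.factorial

/-- The symmetrization
`∑_{σ ∈ S_k} ∏_s x_{σ(s)}^{λ_s} · ∏_{1≤i<j≤k} (x_{σ(i)} − x_{σ(j)} + 1)/(x_{σ(i)} − x_{σ(j)})`,
an element of the fraction field of `ℤ[x_1, …, x_k]`; it equals `mul(λ) · P_λ` where `P_λ` is
the Hall–Littlewood polynomial. -/
noncomputable def hlSum (k : ℕ) (lam : Fin k → ℕ) : FractionRing (MvPolynomial (Fin k) ℤ) :=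
  ∑ σ : Equiv.Perm (Fin k),
    (∏ s : Fin k, Xz k (σ s) ^ lam s) *
      ∏ i : Fin k, ∏ j ∈ Finset.Ioi i,
        (Xz k (σ i) - Xz k (σ j) + 1) / (Xz k (σ i) - Xz k (σ j))

namespace HLaux

open Finset

variable {k : ℕ}

/-- the prefix `{0,…,n-1}` inside `Fin k` -/
def Iseg (k n : ℕ) : Finset (Fin k) := univ.filter (fun t => (t : ℕ) < n)

lemma mem_Iseg {n : ℕ} {t : Fin k} : t ∈ Iseg k n ↔ (t : ℕ) < n := by
  simp [Iseg]

lemma Iseg_succ {n : ℕ} (hn : n < k) :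
    Iseg k (n + 1) = insert ⟨n, hn⟩ (Iseg k n) := by
  ext t
  simp only [mem_Iseg, mem_insert, Fin.ext_iff]
  omega

lemma Iseg_card_le (n : ℕ) : (Iseg k n).card ≤ n := by
  classical
  calc (Iseg k n).card = ((Iseg k n).image Fin.val).card := by
        rw [Finset.card_image_of_injective _ Fin.val_injective]
    _ ≤ (Finset.range n).card := Finset.card_le_card (by
        intro x hx
        rcases Finset.mem_image.1 hx with ⟨t, ht, rfl⟩
        simpa using mem_Iseg.1 ht)
    _ = n := Finset.card_range n

lemma strictMono_val_le {c : ℕ} (u : Fin c → ℕ) (hu : StrictMono u) :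
    ∀ (m : ℕ) (hm : m < c), m ≤ u ⟨m, hm⟩ := by
  intro m
  induction m with
  | zero => intro _; exact Nat.zero_le _
  | succ m ih =>
    intro hm
    have h1 : m < c := Nat.lt_of_succ_lt hm
    have := hu (show (⟨m, h1⟩ : Fin c) < ⟨m + 1, hm⟩ by simp [Fin.lt_def])
    exact Nat.succ_le_of_lt (lt_of_le_of_lt (ih h1) this)

/-- sums of an antitone function over a set are at most the sum over the initial segment
of the same cardinality -/
lemma antitone_sum_le {lam : Fin k → ℕ} (hlam : Antitone lam) (A : Finset (Fin k)) (n : ℕ)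
    (hcard : A.card = (Iseg k n).card) :
    (∑ s ∈ A, lam s) ≤ ∑ t ∈ Iseg k n, lam t := by
  classical
  set c := A.card with hc
  have hck : c ≤ k := le_trans (Finset.card_le_card (Finset.subset_univ A)) (by simp)
  have f : Fin c ≃o {x // x ∈ A} := A.orderIsoOfFin rfl
  have hcn : c ≤ n := hcard ▸ Iseg_card_le n
  have himage : (univ : Finset (Fin c)).image (Fin.castLE hck) = Iseg k n := by
    apply Finset.eq_of_subset_of_card_le
    · intro x hx
      rcases Finset.mem_image.1 hx with ⟨i, _, rfl⟩
      exact mem_Iseg.2 (lt_of_lt_of_le i.isLt hcn)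
    · rw [Finset.card_image_of_injective _ (Fin.castLE_injective hck), Finset.card_univ,
        Fintype.card_fin, ← hcard]
  have hsum1 : ∑ t ∈ Iseg k n, lam t = ∑ i : Fin c, lam (Fin.castLE hck i) := by
    rw [← himage, Finset.sum_image (fun a _ b _ h => Fin.castLE_injective hck h)]
  have hsum2 : ∑ s ∈ A, lam s = ∑ i : Fin c, lam ((f i) : Fin k) := by
    rw [← Finset.sum_finset_coe (fun s => lam s) A]
    exact (Equiv.sum_comp f.toEquiv (fun x => lam (x : Fin k))).symm
  rw [hsum1, hsum2]
  apply Finset.sum_le_sum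
  intro i _
  apply hlam
  have hmono : StrictMono (fun i : Fin c => ((f i : Fin k) : ℕ)) := by
    intro a b hab
    exact Fin.lt_def.1 (f.lt_iff_lt.2 hab)
  have h := strictMono_val_le _ hmono i.val i.isLt
  rw [Fin.le_def, Fin.coe_castLE]
  simpa using h

/-- the finset of ordered pairs i < j in Fin k, as a sigma type -/
def PS (k : ℕ) : Finset (Σ _ : Fin k, Fin k) := univ.sigma (fun i => Ioi i)

lemma mem_PS {x : Σ _ : Fin k, Fin k} : x ∈ PS k ↔ x.1 < x.2 := by
  simp [PS]

/-- number of pairs meeting a set A -/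
def cnt (A : Finset (Fin k)) : ℕ :=
  ((PS k).filter (fun x => x.1 ∈ A ∨ x.2 ∈ A)).card

/-- number of pairs inside a set B -/
def inn (B : Finset (Fin k)) : ℕ :=
  ((PS k).filter (fun x => x.1 ∈ B ∧ x.2 ∈ B)).card

lemma inn_eq_choose (B : Finset (Fin k)) : inn B = B.card.choose 2 := by
  classical
  rw [← Finset.card_powersetCard 2 B, inn]
  apply Finset.card_bij (fun x _ => ({x.1, x.2} : Finset (Fin k)))
  · rintro ⟨i, j⟩ hx
    rw [Finset.mem_filter] at hx
    obtain ⟨hps, hi, hj⟩ := hx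
    have hij : i < j := mem_PS.1 hps
    rw [Finset.mem_powersetCard]
    refine ⟨?_, ?_⟩
    · intro t ht
      rcases Finset.mem_insert.1 ht with rfl | ht
      · exact hi
      · rw [Finset.mem_singleton] at ht; subst ht; exact hj
    · rw [Finset.card_insert_of_notMem (by simp [hij.ne]), Finset.card_singleton]
  · rintro ⟨i, j⟩ hx ⟨i', j'⟩ hx' heq
    rw [Finset.mem_filter] at hx hx'
    have hij : (i : ℕ) < (j : ℕ) := mem_PS.1 hx.1
    have hij' : (i' : ℕ) < (j' : ℕ) := mem_PS.1 hx'.1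
    have hi : i = i' ∨ i = j' := by
      have : i ∈ ({i', j'} : Finset (Fin k)) := heq ▸ (by simp)
      simpa using this
    have hj : j = i' ∨ j = j' := by
      have : j ∈ ({i', j'} : Finset (Fin k)) := heq ▸ (by simp)
      simpa using this
    have hi' : i' = i ∨ i' = j := by
      have : i' ∈ ({i, j} : Finset (Fin k)) := heq ▸ (by simp)
      simpa [← heq] using this
    have hkey : (i : ℕ) = (i' : ℕ) ∧ (j : ℕ) = (j' : ℕ) := by
      rw [Fin.ext_iff] at hi hj hi'
      rcases hi with h1 | h1 <;> rcases hj with h2 | h2 <;> rcases hi' with h3 | h3 <;> omega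
    obtain ⟨v1, v2⟩ := hkey
    have : i = i' := Fin.ext v1
    subst this
    have : j = j' := Fin.ext v2
    subst this
    rfl
  · intro s hs
    rw [Finset.mem_powersetCard] at hs
    obtain ⟨hsub, hcard⟩ := hs
    rcases Finset.card_eq_two.1 hcard with ⟨a, b, hab, rfl⟩
    rcases lt_or_gt_of_ne hab with h | h
    · exact ⟨⟨a, b⟩, Finset.mem_filter.2 ⟨mem_PS.2 h, hsub (by simp), hsub (by simp)⟩, rfl⟩
    · exact ⟨⟨b, a⟩, Finset.mem_filter.2 ⟨mem_PS.2 h, hsub (by simp), hsub (by simp)⟩,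
        Finset.pair_comm b a⟩

lemma cnt_add_inn_compl (A : Finset (Fin k)) : cnt A + inn Aᶜ = (PS k).card := by
  classical
  rw [cnt, inn]
  have h : ∀ x : Σ _ : Fin k, Fin k, (x.1 ∈ Aᶜ ∧ x.2 ∈ Aᶜ) ↔ ¬(x.1 ∈ A ∨ x.2 ∈ A) := by
    intro x; simp only [Finset.mem_compl, not_or]
  rw [Finset.filter_congr (fun x _ => h x)]
  exact Finset.card_filter_add_card_filter_not _

lemma cnt_eq_of_card_eq {A B : Finset (Fin k)} (h : A.card = B.card) : cnt A = cnt B := by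
  have h1 := cnt_add_inn_compl A
  have h2 := cnt_add_inn_compl B
  have h3 : inn Aᶜ = inn Bᶜ := by
    rw [inn_eq_choose, inn_eq_choose, Finset.card_compl, Finset.card_compl, h]
  omega

lemma cnt_Iseg (n : ℕ) : cnt (Iseg k n) = ∑ t ∈ Iseg k n, (Ioi t).card := by
  classical
  rw [cnt, ← Finset.card_sigma]
  congr 1
  ext ⟨i, j⟩
  simp only [Finset.mem_filter, mem_PS, Finset.mem_sigma, mem_Iseg, Finset.mem_Ioi]
  constructor
  · rintro ⟨hij, h | h⟩
    · exact ⟨h, hij⟩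
    · exact ⟨lt_trans (Fin.lt_def.1 hij) h, hij⟩
  · rintro ⟨hi, hij⟩
    exact ⟨hij, Or.inl hi⟩

section LexStuff

lemma domlex {a b : Fin k →₀ ℕ}
    (h : ∀ n : ℕ, ∑ t ∈ Iseg k n, a t ≤ ∑ t ∈ Iseg k n, b t) : toLex a ≤ toLex b := by
  by_contra hcon
  push_neg at hcon
  obtain ⟨j, hbefore, hj⟩ := Finsupp.lex_def.1 hcon
  have hins : Iseg k ((j : ℕ) + 1) = insert j (Iseg k (j : ℕ)) := by
    have := Iseg_succ (k := k) j.isLt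
    simpa using this
  have hnm : j ∉ Iseg k (j : ℕ) := by simp [mem_Iseg]
  have hsum : ∑ t ∈ Iseg k (j : ℕ), a t = ∑ t ∈ Iseg k (j : ℕ), b t := by
    apply Finset.sum_congr rfl
    intro t ht
    exact (hbefore t (Fin.lt_def.2 (mem_Iseg.1 ht))).symm
  have h1 := h ((j : ℕ) + 1)
  rw [hins, Finset.sum_insert hnm, Finset.sum_insert hnm, hsum] at h1
  have : (b j : ℕ) < a j := hj
  omega

lemma toLex_zero_le (a : Fin k →₀ ℕ) : toLex (0 : Fin k →₀ ℕ) ≤ toLex a :=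
  domlex (by simp)

lemma single_lt_single {i j : Fin k} (hij : i < j) :
    toLex (Finsupp.single j (1 : ℕ)) < toLex (Finsupp.single i 1) := by
  refine (⟨i, ?_, ?_⟩ : ∃ i', (∀ t, t < i' → ofLex (toLex (Finsupp.single j (1 : ℕ))) t
      = ofLex (toLex (Finsupp.single i (1 : ℕ))) t) ∧
      ofLex (toLex (Finsupp.single j (1 : ℕ))) i' < ofLex (toLex (Finsupp.single i (1 : ℕ))) i')
  · intro t ht
    have h1 : t ≠ j := ne_of_lt (ht.trans hij)
    have h2 : t ≠ i := ne_of_lt ht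
    simp [Finsupp.single_apply, h1.symm, h2.symm, ofLex_toLex]
  · simp [Finsupp.single_apply, (ne_of_lt hij).symm, ofLex_toLex]

end LexStuff

section TopStuff

open MvPolynomial

/-- `f` has lex-leading monomial at most `μ`, with coefficient `c` at `μ`. -/
def Top (f : MvPolynomial (Fin k) ℤ) (μ : Fin k →₀ ℕ) (c : ℤ) : Prop :=
  MvPolynomial.coeff μ f = c ∧ ∀ d ∈ f.support, toLex d ≤ toLex μ

lemma Top.mul {f g : MvPolynomial (Fin k) ℤ} {μ ν : Fin k →₀ ℕ} {c e : ℤ}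
    (hf : Top f μ c) (hg : Top g ν e) : Top (f * g) (μ + ν) (c * e) := by
  classical
  constructor
  · rw [MvPolynomial.coeff_mul]
    rw [Finset.sum_eq_single_of_mem (μ, ν) (Finset.HasAntidiagonal.mem_antidiagonal.2 rfl)]
    · rw [hf.1, hg.1]
    · rintro ⟨a, b⟩ hab hne
      have habs : a + b = μ + ν := Finset.HasAntidiagonal.mem_antidiagonal.1 hab
      by_contra hz
      have ha : coeff a f ≠ 0 := fun h => hz (by simp [h])
      have hb : coeff b g ≠ 0 := fun h => hz (by simp [h])
      have hta : toLex a ≤ toLex μ := hf.2 a (MvPolynomial.mem_support_iff.2 ha)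
      have htb : toLex b ≤ toLex ν := hg.2 b (MvPolynomial.mem_support_iff.2 hb)
      have hane : a ≠ μ ∨ b ≠ ν := by
        by_contra hc
        push_neg at hc
        exact hne (by rw [hc.1, hc.2])
      have hlt : toLex a + toLex b < toLex μ + toLex ν := by
        rcases hane with h | h
        · exact add_lt_add_of_lt_of_le (lt_of_le_of_ne hta (fun hh => h (toLex.injective hh))) htb
        · exact add_lt_add_of_le_of_lt hta (lt_of_le_of_ne htb (fun hh => h (toLex.injective hh)))
      rw [← toLex_add, ← toLex_add, habs] at hlt
      exact lt_irrefl _ hlt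
  · intro d hd
    have := MvPolynomial.support_mul f g hd
    rw [Finset.mem_add] at this
    obtain ⟨a, ha, b, hb, rfl⟩ := this
    rw [toLex_add, toLex_add]
    exact add_le_add (hf.2 a ha) (hg.2 b hb)

lemma Top.monomial (μ : Fin k →₀ ℕ) : Top (MvPolynomial.monomial μ (1 : ℤ)) μ 1 := by
  constructor
  · simp [MvPolynomial.coeff_monomial]
  · intro d hd
    rw [MvPolynomial.support_monomial] at hd
    simp only [if_neg one_ne_zero, Finset.mem_singleton] at hd
    subst hd
    exact le_refl _

lemma Top.one : Top (1 : MvPolynomial (Fin k) ℤ) 0 1 := by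
  simpa using Top.monomial (k := k) 0

lemma Top.prod {ι : Type*} (S : Finset ι) (f : ι → MvPolynomial (Fin k) ℤ)
    (μ : ι → Fin k →₀ ℕ) (c : ι → ℤ) (h : ∀ x ∈ S, Top (f x) (μ x) (c x)) :
    Top (∏ x ∈ S, f x) (∑ x ∈ S, μ x) (∏ x ∈ S, c x) := by
  classical
  induction S using Finset.cons_induction with
  | empty => simpa using Top.one
  | cons a s ha ih =>
    rw [Finset.prod_cons, Finset.sum_cons, Finset.prod_cons]
    exact Top.mul (h a (Finset.mem_cons_self a s)) (ih (fun x hx => h x (Finset.mem_cons_of_mem hx)))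

lemma top_X_sub_X {i j : Fin k} (hij : i < j) :
    Top (X i - X j : MvPolynomial (Fin k) ℤ) (Finsupp.single i 1) 1 := by
  classical
  have hne : i ≠ j := ne_of_lt hij
  constructor
  · rw [MvPolynomial.coeff_sub, MvPolynomial.coeff_X', MvPolynomial.coeff_X']
    rw [if_pos rfl, if_neg (by
      intro hh
      exact hne ((Finsupp.single_left_inj one_ne_zero).1 hh).symm)]
    ring
  · intro d hd
    have := MvPolynomial.support_sub _ _ _ hd
    rw [Finset.mem_union, MvPolynomial.support_X, MvPolynomial.support_X] at this
    rcases this with h | h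
    · rw [Finset.mem_singleton] at h; subst h; exact le_refl _
    · rw [Finset.mem_singleton] at h; subst h; exact le_of_lt (single_lt_single hij)

lemma top_X_sub_X_add_one {i j : Fin k} (hij : i < j) :
    Top (X i - X j + 1 : MvPolynomial (Fin k) ℤ) (Finsupp.single i 1) 1 := by
  classical
  have hne : i ≠ j := ne_of_lt hij
  have hs0 : (Finsupp.single i (1 : ℕ)) ≠ 0 := fun h => one_ne_zero (Finsupp.single_eq_zero.1 h)
  constructor
  · rw [MvPolynomial.coeff_add, (top_X_sub_X hij).1, MvPolynomial.coeff_one,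
      if_neg (Ne.symm (by simpa using hs0))]
    ring
  · intro d hd
    have h1 := MvPolynomial.support_add hd
    rw [Finset.mem_union] at h1
    rcases h1 with h | h
    · exact (top_X_sub_X hij).2 d h
    · have : d = 0 := by
        have h2 : (1 : MvPolynomial (Fin k) ℤ) = MvPolynomial.monomial 0 1 := by
          simp
        rw [h2, MvPolynomial.support_monomial, if_neg one_ne_zero] at h
        simpa using h
      subst this
      exact toLex_zero_le _
end TopStuff

section Vandermonde

open MvPolynomial

/-- the Vandermonde polynomial -/
noncomputable def Vdm (k : ℕ) : MvPolynomial (Fin k) ℤ := ∏ x ∈ PS k, (X x.1 - X x.2)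

/-- the shifted product -/
noncomputable def Pip (k : ℕ) : MvPolynomial (Fin k) ℤ := ∏ x ∈ PS k, (X x.1 - X x.2 + 1)

/-- the staircase exponent (k-1, k-2, …, 0) -/
noncomputable def deltaF (k : ℕ) : Fin k →₀ ℕ := ∑ x ∈ PS k, Finsupp.single x.1 1

lemma deltaF_apply (t : Fin k) : deltaF k t = (Finset.Ioi t).card := by
  classical
  rw [deltaF, Finsupp.finset_sum_apply]
  have h1 : ∀ x : Σ _ : Fin k, Fin k, (Finsupp.single x.1 (1:ℕ)) t = if x.1 = t then 1 else 0 :=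
    fun x => Finsupp.single_apply
  rw [Finset.sum_congr rfl (fun x _ => h1 x), Finset.sum_boole]
  have h2 : (PS k).filter (fun x => x.1 = t) = ({t} : Finset (Fin k)).sigma (fun i => Finset.Ioi i) := by
    ext ⟨i, j⟩
    simp only [Finset.mem_filter, mem_PS, Finset.mem_sigma, Finset.mem_singleton, Finset.mem_Ioi]
    tauto
  rw [h2, Finset.card_sigma, Finset.sum_singleton]
  simp

lemma sum_deltaF : ∑ t : Fin k, deltaF k t = (PS k).card := by
  classical
  have h1 : ∀ t : Fin k, deltaF k t = ∑ x ∈ PS k, (Finsupp.single x.1 (1:ℕ)) t := by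
    intro t; rw [deltaF, Finsupp.finset_sum_apply]
  rw [Finset.sum_congr rfl (fun t _ => h1 t), Finset.sum_comm]
  have h2 : ∀ x : Σ _ : Fin k, Fin k, ∑ t : Fin k, (Finsupp.single x.1 (1:ℕ)) t = 1 := by
    intro x
    have : ∀ t : Fin k, (Finsupp.single x.1 (1:ℕ)) t = if x.1 = t then 1 else 0 :=
      fun _ => Finsupp.single_apply
    rw [Finset.sum_congr rfl (fun t _ => this t), Finset.sum_ite_eq]
    simp
  rw [Finset.sum_congr rfl (fun x _ => h2 x), Finset.sum_const, smul_eq_mul, mul_one]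

lemma top_Vdm : Top (Vdm k) (deltaF k) 1 := by
  have h := Top.prod (PS k) (fun x => (X x.1 - X x.2 : MvPolynomial (Fin k) ℤ))
    (fun x => Finsupp.single x.1 1) (fun _ => 1) (fun x hx => top_X_sub_X (mem_PS.1 hx))
  simpa [Vdm, deltaF] using h

lemma top_Pip : Top (Pip k) (deltaF k) 1 := by
  have h := Top.prod (PS k) (fun x => (X x.1 - X x.2 + 1 : MvPolynomial (Fin k) ℤ))
    (fun x => Finsupp.single x.1 1) (fun _ => 1) (fun x hx => top_X_sub_X_add_one (mem_PS.1 hx))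
  simpa [Pip, deltaF] using h

lemma supp_factor (x : Σ _ : Fin k, Fin k) :
    (X x.1 - X x.2 + 1 : MvPolynomial (Fin k) ℤ).support ⊆
      {Finsupp.single x.1 1, Finsupp.single x.2 1, 0} := by
  classical
  intro d hd
  have h1 := MvPolynomial.support_add hd
  rw [Finset.mem_union] at h1
  rcases h1 with h | h
  · have h2 := MvPolynomial.support_sub _ _ _ h
    rw [Finset.mem_union, MvPolynomial.support_X, MvPolynomial.support_X] at h2
    simp only [Finset.mem_insert, Finset.mem_singleton]
    rcases h2 with h | h
    · exact Or.inl (Finset.mem_singleton.1 h)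
    · exact Or.inr (Or.inl (Finset.mem_singleton.1 h))
  · have h2 : (1 : MvPolynomial (Fin k) ℤ) = MvPolynomial.monomial 0 1 := by simp
    rw [h2, MvPolynomial.support_monomial, if_neg one_ne_zero, Finset.mem_singleton] at h
    simp [h]

/-- key combinatorial bound on supports of products over pairs -/
lemma supp_prod_pairs (S : Finset (Σ _ : Fin k, Fin k))
    (g : (Σ _ : Fin k, Fin k) → MvPolynomial (Fin k) ℤ)
    (hg : ∀ x ∈ S, (g x).support ⊆ {Finsupp.single x.1 1, Finsupp.single x.2 1, 0}) :
    ∀ d ∈ (∏ x ∈ S, g x).support, ∀ A : Finset (Fin k),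
      (∑ s ∈ A, d s) ≤ (S.filter (fun x => x.1 ∈ A ∨ x.2 ∈ A)).card := by
  classical
  induction S using Finset.cons_induction with
  | empty =>
    intro d hd A
    rw [Finset.prod_empty] at hd
    have h2 : (1 : MvPolynomial (Fin k) ℤ) = MvPolynomial.monomial 0 1 := by simp
    rw [h2, MvPolynomial.support_monomial, if_neg one_ne_zero, Finset.mem_singleton] at hd
    subst hd
    simp
  | cons a s ha ih =>
    intro d hd A
    rw [Finset.prod_cons] at hd
    have hmem := MvPolynomial.support_mul _ _ hd
    rw [Finset.mem_add] at hmem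
    obtain ⟨u, hu, v, hv, rfl⟩ := hmem
    have hu3 := hg a (Finset.mem_cons_self a s) hu
    have hihv := ih (fun x hx => hg x (Finset.mem_cons_of_mem hx)) v hv A
    have hsum : ∑ s' ∈ A, (u + v) s' = (∑ s' ∈ A, u s') + ∑ s' ∈ A, v s' := by
      simp [Finsupp.add_apply, Finset.sum_add_distrib]
    have hsingle : ∀ i : Fin k, (∑ s' ∈ A, (Finsupp.single i (1:ℕ)) s') = if i ∈ A then 1 else 0 := by
      intro i
      have : ∀ s' ∈ A, (Finsupp.single i (1:ℕ)) s' = if i = s' then 1 else 0 :=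
        fun s' _ => Finsupp.single_apply
      rw [Finset.sum_congr rfl this, Finset.sum_ite_eq]
    have hub : (∑ s' ∈ A, u s') ≤ (if a.1 ∈ A ∨ a.2 ∈ A then 1 else 0) := by
      simp only [Finset.mem_insert, Finset.mem_singleton] at hu3
      rcases hu3 with rfl | rfl | rfl
      · rw [hsingle]
        split_ifs with h1 h2 <;> simp_all
      · rw [hsingle]
        split_ifs with h1 h2 <;> simp_all
      · simp
    have hcard : ((Finset.cons a s ha).filter (fun x => x.1 ∈ A ∨ x.2 ∈ A)).card
        = (if a.1 ∈ A ∨ a.2 ∈ A then 1 else 0) + (s.filter (fun x => x.1 ∈ A ∨ x.2 ∈ A)).card := by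
      rw [Finset.filter_cons]
      split_ifs with h
      · rw [Finset.card_cons]
        omega
      · simp
    rw [hsum, hcard]
    omega

end Vandermonde

section SignLemma

open MvPolynomial

lemma prod_perm_sub {F : Type*} [CommRing F] (v : Fin k → F) (σ : Equiv.Perm (Fin k)) :
    ∏ x ∈ PS k, (v (σ x.1) - v (σ x.2))
      = ((Equiv.Perm.sign σ : ℤ) : F) * ∏ x ∈ PS k, (v x.1 - v x.2) := by
  classical
  have hflip : ∀ w : Fin k → F,
      ∏ x ∈ PS k, (w x.1 - w x.2) = (-1 : F) ^ (PS k).card * ∏ x ∈ PS k, (w x.2 - w x.1) := by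
    intro w
    rw [← Finset.prod_const, ← Finset.prod_mul_distrib]
    apply Finset.prod_congr rfl
    intro x _
    ring
  have e2 : ∏ x ∈ PS k, (v (σ x.2) - v (σ x.1)) = (Matrix.vandermonde (v ∘ σ)).det := by
    rw [Matrix.det_vandermonde]
    exact (Finset.prod_sigma' Finset.univ (fun i => Finset.Ioi i)
      (fun i j => v (σ j) - v (σ i))).symm
  have e3 : ∏ x ∈ PS k, (v x.2 - v x.1) = (Matrix.vandermonde v).det := by
    rw [Matrix.det_vandermonde]
    exact (Finset.prod_sigma' Finset.univ (fun i => Finset.Ioi i)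
      (fun i j => v j - v i)).symm
  have hsub : Matrix.vandermonde (v ∘ σ) = (Matrix.vandermonde v).submatrix σ id := by
    ext i j
    rfl
  have e4 : ∏ x ∈ PS k, (v (σ x.1) - v (σ x.2))
      = (-1 : F) ^ (PS k).card * ∏ x ∈ PS k, (v (σ x.2) - v (σ x.1)) := hflip (fun t => v (σ t))
  have e5 : (Matrix.vandermonde (v ∘ σ)).det
      = ((Equiv.Perm.sign σ : ℤ) : F) * (Matrix.vandermonde v).det := by
    rw [hsub, Matrix.det_permute]
  rw [e4, e2, e5, hflip v, e3]
  ring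

end SignLemma

section NPoly

open MvPolynomial

variable (lam : Fin k → ℕ)

/-- `lam` as a finsupp -/
noncomputable def Fl (lam : Fin k → ℕ) : Fin k →₀ ℕ := Finsupp.equivFunOnFinite.symm lam

lemma Fl_apply (t : Fin k) : Fl lam t = lam t := rfl

/-- the polynomial x^lam * ∏ (x_i - x_j + 1) -/
noncomputable def Gp (k : ℕ) (lam : Fin k → ℕ) : MvPolynomial (Fin k) ℤ :=
  MvPolynomial.monomial (Fl lam) 1 * Pip k

/-- the alternating symmetrization -/
noncomputable def Np (k : ℕ) (lam : Fin k → ℕ) : MvPolynomial (Fin k) ℤ :=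
  ∑ σ : Equiv.Perm (Fin k), (Equiv.Perm.sign σ : ℤ) • MvPolynomial.rename ⇑σ (Gp k lam)

/-- the leading exponent lam + delta -/
noncomputable def muF (k : ℕ) (lam : Fin k → ℕ) : Fin k →₀ ℕ := Fl lam + deltaF k

lemma coeff_rename_perm (σ : Equiv.Perm (Fin k)) (f : MvPolynomial (Fin k) ℤ) (μ : Fin k →₀ ℕ) :
    MvPolynomial.coeff μ (MvPolynomial.rename ⇑σ f)
      = MvPolynomial.coeff (Finsupp.equivMapDomain σ.symm μ) f := by
  have h : Finsupp.mapDomain ⇑σ (Finsupp.equivMapDomain σ.symm μ) = μ := by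
    ext t
    rw [Finsupp.mapDomain_equiv_apply]
    simp
  conv_lhs => rw [← h]
  rw [MvPolynomial.coeff_rename_mapDomain ⇑σ σ.injective]

lemma rename_Vdm (σ : Equiv.Perm (Fin k)) :
    MvPolynomial.rename ⇑σ (Vdm k)
      = MvPolynomial.C (Equiv.Perm.sign σ : ℤ) * Vdm k := by
  rw [Vdm, map_prod]
  have h1 : ∀ x ∈ PS k, (MvPolynomial.rename ⇑σ) (X x.1 - X x.2)
      = (X (σ x.1) - X (σ x.2) : MvPolynomial (Fin k) ℤ) := by
    intro x _
    rw [map_sub, rename_X, rename_X]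
  rw [Finset.prod_congr rfl h1, prod_perm_sub (fun i => (X i : MvPolynomial (Fin k) ℤ)) σ]
  norm_cast

lemma sum_eps_eq (ε : Fin k →₀ ℕ) :
    ∑ i ∈ ε.support, ε i = ∑ t : Fin k, ε t :=
  Finset.sum_subset (Finset.subset_univ _)
    (fun t _ ht => Finsupp.notMem_support_iff.1 ht)

lemma coeff_Pip_of_full (ε : Fin k →₀ ℕ) (hsum : ∑ t : Fin k, ε t = (PS k).card) :
    MvPolynomial.coeff ε (Pip k) = MvPolynomial.coeff ε (Vdm k) := by
  classical
  rw [Pip, Finset.prod_add, MvPolynomial.coeff_sum,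
    Finset.sum_eq_single_of_mem (PS k) (Finset.mem_powerset_self _)]
  · rw [Finset.sdiff_self, Finset.prod_empty, mul_one, Vdm]
  · intro T hT hne
    have hsub : T ⊆ PS k := Finset.mem_powerset.1 hT
    have hlt : T.card < (PS k).card := Finset.card_lt_card (lt_of_le_of_ne hsub hne)
    have hdeg : (∏ x ∈ T, (X x.1 - X x.2 : MvPolynomial (Fin k) ℤ)).totalDegree < ∑ i ∈ ε.support, ε i := by
      calc (∏ x ∈ T, (X x.1 - X x.2 : MvPolynomial (Fin k) ℤ)).totalDegree
          ≤ ∑ x ∈ T, (X x.1 - X x.2 : MvPolynomial (Fin k) ℤ).totalDegree :=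
            MvPolynomial.totalDegree_finset_prod _ _
        _ ≤ ∑ x ∈ T, 1 := Finset.sum_le_sum (fun x _ => le_trans
            (MvPolynomial.totalDegree_sub _ _)
            (by rw [MvPolynomial.totalDegree_X, MvPolynomial.totalDegree_X]; exact le_refl _))
        _ = T.card := by rw [Finset.sum_const, smul_eq_mul, mul_one]
        _ < (PS k).card := hlt
        _ = ∑ i ∈ ε.support, ε i := by rw [sum_eps_eq, hsum]
    rw [Finset.prod_const_one, mul_one, MvPolynomial.coeff_eq_zero_of_totalDegree_lt hdeg]

/-- coefficient of μ in a renamed G, for stabilizing σ -/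
lemma coeff_mu_rename_stab (σ : Equiv.Perm (Fin k)) (hstab : ∀ s, lam (σ s) = lam s) :
    MvPolynomial.coeff (muF k lam) (MvPolynomial.rename ⇑σ (Gp k lam))
      = (Equiv.Perm.sign σ : ℤ) := by
  classical
  rw [coeff_rename_perm]
  set dde : Fin k →₀ ℕ := Finsupp.equivMapDomain σ.symm (deltaF k) with hdde
  have hd : Finsupp.equivMapDomain σ.symm (muF k lam) = Fl lam + dde := by
    ext t
    simp only [Finsupp.equivMapDomain_apply, Equiv.symm_symm, Finsupp.add_apply, hdde,
      muF, Fl_apply]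
    rw [hstab t]
  rw [hd, Gp, MvPolynomial.coeff_monomial_mul', if_pos (self_le_add_right (Fl lam) dde),
    one_mul, add_tsub_cancel_left]
  have hsum : ∑ t : Fin k, dde t = (PS k).card := by
    have h1 : ∀ t : Fin k, dde t = deltaF k (σ t) := by
      intro t; simp [hdde]
    rw [Finset.sum_congr rfl (fun t _ => h1 t), Equiv.sum_comp σ (fun t => deltaF k t), sum_deltaF]
  rw [coeff_Pip_of_full _ hsum]
  have h2 := coeff_rename_perm σ (Vdm k) (deltaF k)
  rw [rename_Vdm, MvPolynomial.coeff_C_mul, top_Vdm.1, mul_one] at h2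
  exact h2.symm

end NPoly

section Prefixes

open MvPolynomial

variable (lam : Fin k → ℕ)

/-- preimage of the initial segment under σ -/
def Aset (σ : Equiv.Perm (Fin k)) (n : ℕ) : Finset (Fin k) :=
  Finset.univ.filter (fun s => ((σ s : Fin k) : ℕ) < n)

lemma Aset_eq_image (σ : Equiv.Perm (Fin k)) (n : ℕ) :
    Aset σ n = (Iseg k n).image ⇑σ.symm := by
  ext s
  simp only [Aset, Finset.mem_filter, Finset.mem_image, Finset.mem_univ, true_and, mem_Iseg]
  constructor
  · intro h
    exact ⟨σ s, h, by simp⟩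
  · rintro ⟨t, ht, rfl⟩
    simpa using ht

lemma card_Aset (σ : Equiv.Perm (Fin k)) (n : ℕ) : (Aset σ n).card = (Iseg k n).card := by
  rw [Aset_eq_image, Finset.card_image_of_injective _ σ.symm.injective]

lemma sum_Aset (σ : Equiv.Perm (Fin k)) (n : ℕ) (h : Fin k → ℕ) :
    ∑ s ∈ Aset σ n, h (σ s) = ∑ t ∈ Iseg k n, h t := by
  rw [Aset_eq_image, Finset.sum_image (fun a _ b _ hab => σ.symm.injective hab)]
  apply Finset.sum_congr rfl
  intro t _
  simp

lemma muF_apply (t : Fin k) : muF k lam t = lam t + deltaF k t := by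
  simp [muF, Finsupp.add_apply, Fl_apply]

lemma core_chain (hlam : Antitone lam) (σ : Equiv.Perm (Fin k)) (c : Fin k →₀ ℕ)
    (hle : Fl lam ≤ c) (hsupp : c - Fl lam ∈ (Pip k).support) (n : ℕ) :
    (∑ s ∈ Aset σ n, c s ≤ ∑ t ∈ Iseg k n, muF k lam t) ∧
    ((∑ s ∈ Aset σ n, c s = ∑ t ∈ Iseg k n, muF k lam t) →
       ∑ s ∈ Aset σ n, lam s = ∑ t ∈ Iseg k n, lam t) := by
  classical
  have hc_point : ∀ s, c s = lam s + (c - Fl lam) s := by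
    intro s
    have h1 := Finsupp.le_def.1 hle s
    rw [Fl_apply] at h1
    rw [Finsupp.tsub_apply, Fl_apply]
    omega
  have hsum_dec : ∑ s ∈ Aset σ n, c s
      = (∑ s ∈ Aset σ n, lam s) + ∑ s ∈ Aset σ n, (c - Fl lam) s := by
    rw [← Finset.sum_add_distrib]
    exact Finset.sum_congr rfl (fun s _ => hc_point s)
  have hεA : ∑ s ∈ Aset σ n, (c - Fl lam) s ≤ cnt (Aset σ n) := by
    have := supp_prod_pairs (PS k) (fun x => X x.1 - X x.2 + 1)
      (fun x _ => supp_factor x) (c - Fl lam) (by rw [← Pip] at *; exact hsupp) (Aset σ n)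
    exact this
  have hcnt : cnt (Aset σ n) = ∑ t ∈ Iseg k n, deltaF k t := by
    rw [cnt_eq_of_card_eq (card_Aset σ n), cnt_Iseg]
    exact Finset.sum_congr rfl (fun t _ => (deltaF_apply t).symm)
  have hlamA : ∑ s ∈ Aset σ n, lam s ≤ ∑ t ∈ Iseg k n, lam t :=
    antitone_sum_le hlam _ n (card_Aset σ n)
  have hmu_sum : ∑ t ∈ Iseg k n, muF k lam t
      = (∑ t ∈ Iseg k n, lam t) + ∑ t ∈ Iseg k n, deltaF k t := by
    rw [← Finset.sum_add_distrib]
    exact Finset.sum_congr rfl (fun t _ => muF_apply lam t)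
  constructor
  · omega
  · intro h
    omega

lemma coeff_mu_rename_nonstab (hlam : Antitone lam) (σ : Equiv.Perm (Fin k))
    (hnstab : ¬ ∀ s, lam (σ s) = lam s) :
    MvPolynomial.coeff (muF k lam) (MvPolynomial.rename ⇑σ (Gp k lam)) = 0 := by
  classical
  rw [coeff_rename_perm, Gp, MvPolynomial.coeff_monomial_mul']
  set c : Fin k →₀ ℕ := Finsupp.equivMapDomain σ.symm (muF k lam) with hc
  split_ifs with hle
  · rw [one_mul]
    by_contra hz
    have hsupp : c - Fl lam ∈ (Pip k).support := MvPolynomial.mem_support_iff.2 hz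
    have hcapp : ∀ s, c s = muF k lam (σ s) := by
      intro s; simp [hc]
    have hcsum : ∀ n, ∑ s ∈ Aset σ n, c s = ∑ t ∈ Iseg k n, muF k lam t := by
      intro n
      rw [Finset.sum_congr rfl (fun s _ => hcapp s)]
      exact sum_Aset σ n (fun t => muF k lam t)
    have hEq : ∀ n, ∑ s ∈ Aset σ n, lam s = ∑ t ∈ Iseg k n, lam t := by
      intro n
      exact (core_chain lam hlam σ c hle hsupp n).2 (hcsum n)
    have hstep : ∀ (n : ℕ) (hn' : n < k), lam (σ.symm ⟨n, hn'⟩) = lam ⟨n, hn'⟩ := by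
      intro n hn'
      have e1 := hEq n
      have e2 := hEq (n + 1)
      have hA : Aset σ (n + 1) = insert (σ.symm ⟨n, hn'⟩) (Aset σ n) := by
        ext s
        simp only [Aset, Finset.mem_filter, Finset.mem_univ, true_and, Finset.mem_insert]
        constructor
        · intro h
          rcases Nat.lt_succ_iff_lt_or_eq.1 h with h | h
          · exact Or.inr h
          · left
            rw [← Equiv.symm_apply_apply σ s]
            congr 1
            exact Fin.ext h
        · rintro (rfl | h)
          · simp
          · exact Nat.lt_succ_of_lt h
      have hnm : σ.symm ⟨n, hn'⟩ ∉ Aset σ n := by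
        simp [Aset]
      have hnm2 : (⟨n, hn'⟩ : Fin k) ∉ Iseg k n := by simp [mem_Iseg]
      rw [hA, Finset.sum_insert hnm, Iseg_succ hn', Finset.sum_insert hnm2] at e2
      omega
    apply hnstab
    intro s
    have := hstep ((σ s) : ℕ) (σ s).isLt
    simp only [Fin.eta] at this
    rw [Equiv.symm_apply_apply] at this
    omega
  · rfl

lemma supp_rename_le (hlam : Antitone lam) (σ : Equiv.Perm (Fin k)) :
    ∀ e ∈ (MvPolynomial.rename ⇑σ (Gp k lam)).support, toLex e ≤ toLex (muF k lam) := by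
  classical
  intro e he
  have hcoeff : MvPolynomial.coeff (Finsupp.equivMapDomain σ.symm e) (Gp k lam) ≠ 0 := by
    rw [← coeff_rename_perm]
    exact MvPolynomial.mem_support_iff.1 he
  set c : Fin k →₀ ℕ := Finsupp.equivMapDomain σ.symm e with hc
  rw [Gp, MvPolynomial.coeff_monomial_mul'] at hcoeff
  have hle : Fl lam ≤ c := by
    by_contra hcon
    rw [if_neg hcon] at hcoeff
    exact hcoeff rfl
  rw [if_pos hle, one_mul] at hcoeff
  have hsupp : c - Fl lam ∈ (Pip k).support := MvPolynomial.mem_support_iff.2 hcoeff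
  apply domlex
  intro n
  have hcapp : ∀ s, c s = e (σ s) := by
    intro s; simp [hc]
  have h0 : ∑ t ∈ Iseg k n, e t = ∑ s ∈ Aset σ n, c s := by
    rw [Finset.sum_congr rfl (fun s _ => hcapp s)]
    exact (sum_Aset σ n (fun t => e t)).symm
  have h1 := (core_chain lam hlam σ c hle hsupp n).1
  rw [h0]
  exact h1

end Prefixes

section NpTop

open MvPolynomial

variable (lam : Fin k → ℕ)

lemma card_stab :
    (Finset.univ.filter (fun σ : Equiv.Perm (Fin k) => ∀ s, lam (σ s) = lam s)).card
      = mulOf k lam := by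
  classical
  rw [← Fintype.card_subtype]
  have e : {σ : Equiv.Perm (Fin k) // ∀ s, lam (σ s) = lam s}
      ≃ {σ : Equiv.Perm (Fin k) // lam ∘ ⇑σ = lam} :=
    Equiv.subtypeEquivRight (by
      intro σ
      rw [_root_.funext_iff]
      exact Iff.rfl)
  rw [Fintype.card_congr e, DomMulAct.stabilizer_card' (f := lam), mulOf]
  apply Finset.prod_congr rfl
  intro i _
  rw [Fintype.card_subtype]

lemma sign_mul_self (σ : Equiv.Perm (Fin k)) :
    ((Equiv.Perm.sign σ : ℤ)) * ((Equiv.Perm.sign σ : ℤ)) = 1 := by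
  rw [← Units.val_mul, Int.units_mul_self, Units.val_one]

lemma coeff_muF_Np (hlam : Antitone lam) :
    MvPolynomial.coeff (muF k lam) (Np k lam) = (mulOf k lam : ℤ) := by
  classical
  rw [Np, MvPolynomial.coeff_sum]
  have h1 : ∀ σ : Equiv.Perm (Fin k),
      MvPolynomial.coeff (muF k lam) ((Equiv.Perm.sign σ : ℤ) • MvPolynomial.rename ⇑σ (Gp k lam))
        = if (∀ s, lam (σ s) = lam s) then 1 else 0 := by
    intro σ
    rw [MvPolynomial.coeff_smul]
    split_ifs with h
    · rw [coeff_mu_rename_stab lam σ h, smul_eq_mul, sign_mul_self]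
    · rw [coeff_mu_rename_nonstab lam hlam σ h, smul_zero]
  rw [Finset.sum_congr rfl (fun σ _ => h1 σ), Finset.sum_boole, card_stab]

lemma supp_Np_le (hlam : Antitone lam) :
    ∀ e ∈ (Np k lam).support, toLex e ≤ toLex (muF k lam) := by
  classical
  intro e he
  have hne := MvPolynomial.mem_support_iff.1 he
  rw [Np, MvPolynomial.coeff_sum] at hne
  have : ∃ σ : Equiv.Perm (Fin k),
      MvPolynomial.coeff e ((Equiv.Perm.sign σ : ℤ) • MvPolynomial.rename ⇑σ (Gp k lam)) ≠ 0 := by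
    by_contra hcon
    push_neg at hcon
    exact hne (Finset.sum_eq_zero (fun σ _ => hcon σ))
  obtain ⟨σ, hσ⟩ := this
  rw [MvPolynomial.coeff_smul] at hσ
  have h2 : MvPolynomial.coeff e (MvPolynomial.rename ⇑σ (Gp k lam)) ≠ 0 := by
    intro h
    rw [h, smul_zero] at hσ
    exact hσ rfl
  exact supp_rename_le lam hlam σ e (MvPolynomial.mem_support_iff.2 h2)

lemma top_Np (hlam : Antitone lam) : Top (Np k lam) (muF k lam) (mulOf k lam : ℤ) :=
  ⟨coeff_muF_Np lam hlam, supp_Np_le lam hlam⟩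

lemma rename_Np (τ : Equiv.Perm (Fin k)) :
    MvPolynomial.rename ⇑τ (Np k lam) = (Equiv.Perm.sign τ : ℤ) • Np k lam := by
  classical
  rw [Np, map_sum]
  have h1 : ∀ σ : Equiv.Perm (Fin k),
      MvPolynomial.rename ⇑τ ((Equiv.Perm.sign σ : ℤ) • MvPolynomial.rename ⇑σ (Gp k lam))
        = (Equiv.Perm.sign σ : ℤ) • MvPolynomial.rename ⇑(τ * σ) (Gp k lam) := by
    intro σ
    rw [map_smul, MvPolynomial.rename_rename]
    rfl
  rw [Finset.sum_congr rfl (fun σ _ => h1 σ)]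
  have h2 := Fintype.sum_equiv (Equiv.mulLeft τ)
    (fun σ : Equiv.Perm (Fin k) => (Equiv.Perm.sign σ : ℤ) • MvPolynomial.rename ⇑(τ * σ) (Gp k lam))
    (fun ρ : Equiv.Perm (Fin k) => (Equiv.Perm.sign (τ⁻¹ * ρ) : ℤ) • MvPolynomial.rename ⇑ρ (Gp k lam))
    (by
      intro σ
      simp only [Equiv.coe_mulLeft]
      rw [inv_mul_cancel_left])
  rw [h2, Finset.smul_sum]
  apply Finset.sum_congr rfl
  intro ρ _
  rw [← mul_smul]
  congr 1
  rw [Equiv.Perm.sign_mul, Equiv.Perm.sign_inv]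
  push_cast
  ring

end NpTop

section Bridge

open MvPolynomial

local notation "Rk" => MvPolynomial (Fin k) ℤ
local notation "Kk" => FractionRing (MvPolynomial (Fin k) ℤ)

lemma X_sub_X_ne {i j : Fin k} (hij : i ≠ j) : (X i - X j : Rk) ≠ 0 := by
  classical
  intro h
  have h1 : MvPolynomial.coeff (Finsupp.single i 1) (X i - X j : Rk) = 1 := by
    rw [MvPolynomial.coeff_sub, MvPolynomial.coeff_X', MvPolynomial.coeff_X', if_pos rfl,
      if_neg (fun hh => hij ((Finsupp.single_left_inj one_ne_zero).1 hh).symm)]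
    ring
  rw [h] at h1
  simp at h1

lemma Vdm_ne_zero : (Vdm k) ≠ 0 := by
  intro h
  have := top_Vdm (k := k) |>.1
  rw [h] at this
  simp at this

lemma Xz_sub_ne {i j : Fin k} (hij : i ≠ j) : Xz k i - Xz k j ≠ 0 := by
  have h1 : Xz k i - Xz k j
      = algebraMap Rk Kk (X i - X j) := by
    rw [map_sub]; rfl
  rw [h1]
  exact (map_ne_zero_iff _ (IsFractionRing.injective Rk Kk)).2 (X_sub_X_ne hij)

lemma algVdm_ne_zero : algebraMap Rk Kk (Vdm k) ≠ 0 :=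
  (map_ne_zero_iff _ (IsFractionRing.injective Rk Kk)).2 Vdm_ne_zero

lemma algVdm_eq : algebraMap Rk Kk (Vdm k) = ∏ x ∈ PS k, (Xz k x.1 - Xz k x.2) := by
  rw [Vdm, map_prod]
  exact Finset.prod_congr rfl (fun x _ => by rw [map_sub]; rfl)

lemma monomial_Fl (lam : Fin k → ℕ) :
    (MvPolynomial.monomial (Fl lam) 1 : Rk) = ∏ s : Fin k, X s ^ lam s := by
  classical
  rw [← MvPolynomial.prod_X_pow_eq_monomial]
  rw [Finset.prod_subset (Finset.subset_univ (Fl lam).support)]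
  · exact Finset.prod_congr rfl (fun s _ => by rw [Fl_apply])
  · intro s _ hs
    rw [Finsupp.notMem_support_iff.1 hs, pow_zero]

lemma alg_rename_Gp (lam : Fin k → ℕ) (σ : Equiv.Perm (Fin k)) :
    algebraMap Rk Kk (MvPolynomial.rename ⇑σ (Gp k lam))
      = (∏ s : Fin k, Xz k (σ s) ^ lam s)
        * ∏ x ∈ PS k, (Xz k (σ x.1) - Xz k (σ x.2) + 1) := by
  rw [Gp, map_mul, monomial_Fl, map_prod, map_mul, map_prod]
  congr 1
  · apply Finset.prod_congr rfl
    intro s _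
    rw [map_pow, rename_X, map_pow]
    rfl
  · rw [Pip, map_prod, map_prod]
    apply Finset.prod_congr rfl
    intro x _
    rw [map_add, map_sub, rename_X, rename_X, map_one, map_add, map_sub, map_one]
    rfl

/-- the main bridge: hlSum times the Vandermonde equals the alternating sum -/
lemma hlSum_mul_Vdm (lam : Fin k → ℕ) :
    hlSum k lam * algebraMap Rk Kk (Vdm k) = algebraMap Rk Kk (Np k lam) := by
  classical
  rw [hlSum, Np, map_sum, Finset.sum_mul]
  apply Finset.sum_congr rfl
  intro σ _
  have hioi : ∀ (F : Fin k → Fin k → Kk),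
      (∏ i : Fin k, ∏ j ∈ Finset.Ioi i, F i j) = ∏ x ∈ PS k, F x.1 x.2 := by
    intro F
    exact Finset.prod_sigma' Finset.univ (fun i => Finset.Ioi i) F
  rw [hioi (fun i j => (Xz k (σ i) - Xz k (σ j) + 1) / (Xz k (σ i) - Xz k (σ j)))]
  rw [Finset.prod_div_distrib]
  have hsign : ∏ x ∈ PS k, (Xz k (σ x.1) - Xz k (σ x.2))
      = ((Equiv.Perm.sign σ : ℤ) : Kk) * algebraMap Rk Kk (Vdm k) := by
    rw [algVdm_eq]
    exact prod_perm_sub (fun i => Xz k i) σ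
  have hc2 : ((Equiv.Perm.sign σ : ℤ) : Kk) * ((Equiv.Perm.sign σ : ℤ) : Kk) = 1 := by
    rw [← Int.cast_mul, sign_mul_self, Int.cast_one]
  have hcne : ((Equiv.Perm.sign σ : ℤ) : Kk) ≠ 0 := by
    intro h
    rw [h, mul_zero] at hc2
    exact zero_ne_one hc2
  have hAV := algVdm_ne_zero (k := k)
  set c : Kk := ((Equiv.Perm.sign σ : ℤ) : Kk)
  set AV : Kk := algebraMap Rk Kk (Vdm k)
  set M : Kk := ∏ s : Fin k, Xz k (σ s) ^ lam s
  set N1 : Kk := ∏ x ∈ PS k, (Xz k (σ x.1) - Xz k (σ x.2) + 1)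
  have hsmul : algebraMap Rk Kk ((Equiv.Perm.sign σ : ℤ) • MvPolynomial.rename ⇑σ (Gp k lam))
      = c * (M * N1) := by
    rw [map_zsmul, zsmul_eq_mul, alg_rename_Gp]
  rw [hsmul, hsign]
  have hcinv : c⁻¹ = c := by
    rw [inv_eq_of_mul_eq_one_right hc2]
  calc M * (N1 / (c * AV)) * AV = M * N1 * (AV * (c⁻¹ * AV⁻¹)) := by
        rw [div_eq_mul_inv, mul_inv]
        ring
    _ = M * N1 * c⁻¹ * (AV * AV⁻¹) := by ring
    _ = M * N1 * c := by rw [mul_inv_cancel₀ hAV, mul_one, hcinv]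
    _ = c * (M * N1) := by ring

/-- the polynomial identity characterizing P -/
lemma key_poly (lam : Fin k → ℕ) (Pl : Rk)
    (hPl : hlSum k lam = (mulOf k lam : Kk) * algebraMap Rk Kk Pl) :
    Vdm k * (MvPolynomial.C (mulOf k lam : ℤ) * Pl) = Np k lam := by
  apply IsFractionRing.injective Rk Kk
  have h1 := hlSum_mul_Vdm (k := k) lam
  rw [hPl] at h1
  rw [map_mul, map_mul, ← h1]
  have h2 : algebraMap Rk Kk (MvPolynomial.C (mulOf k lam : ℤ)) = (mulOf k lam : Kk) := by
    have : (MvPolynomial.C (mulOf k lam : ℤ) : Rk) = ((mulOf k lam : ℕ) : Rk) := by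
      push_cast
      rfl
    rw [this, map_natCast]
  rw [h2]
  ring

end Bridge

section PFacts

open MvPolynomial

local notation "Rk" => MvPolynomial (Fin k) ℤ

variable (lam : Fin k → ℕ)

lemma mulOf_pos : 0 < mulOf k lam := Finset.prod_pos (fun i _ => Nat.factorial_pos _)

lemma top_C : Top (MvPolynomial.C (mulOf k lam : ℤ) : Rk) 0 (mulOf k lam : ℤ) := by
  classical
  have hm0 : (mulOf k lam : ℤ) ≠ 0 := by
    exact_mod_cast (mulOf_pos (k := k) lam).ne'
  constructor
  · rw [MvPolynomial.coeff_C, if_pos rfl]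
  · intro d hd
    rw [MvPolynomial.C_apply, MvPolynomial.support_monomial, if_neg hm0,
      Finset.mem_singleton] at hd
    subst hd
    exact le_refl _

lemma P_top (hlam : Antitone lam) (Pl : Rk)
    (hkey : Vdm k * (MvPolynomial.C (mulOf k lam : ℤ) * Pl) = Np k lam) :
    MvPolynomial.coeff (Fl lam) Pl = 1 ∧ ∀ d ∈ Pl.support, toLex d ≤ toLex (Fl lam) := by
  classical
  have hm0 : (mulOf k lam : ℤ) ≠ 0 := by
    exact_mod_cast (mulOf_pos (k := k) lam).ne'
  have hsupp : ∀ d ∈ Pl.support, toLex d ≤ toLex (Fl lam) := by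
    intro d hd
    have hne : Pl.support.Nonempty := ⟨d, hd⟩
    obtain ⟨dm, hdm, hmax⟩ := Finset.exists_max_image Pl.support toLex hne
    have htopP : Top Pl dm (MvPolynomial.coeff dm Pl) := ⟨rfl, hmax⟩
    have h3 := (top_Vdm (k := k)).mul ((top_C lam).mul htopP)
    rw [zero_add, one_mul] at h3
    have hcoeffne : MvPolynomial.coeff (deltaF k + dm) (Np k lam) ≠ 0 := by
      rw [← hkey, h3.1]
      exact mul_ne_zero hm0 (MvPolynomial.mem_support_iff.1 hdm)
    have h5 := supp_Np_le lam hlam _ (MvPolynomial.mem_support_iff.2 hcoeffne)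
    have h6 : toLex (deltaF k) + toLex dm ≤ toLex (deltaF k) + toLex (Fl lam) := by
      have h7 : toLex (deltaF k + dm) ≤ toLex (Fl lam + deltaF k) := by
        rw [muF] at h5
        exact h5
      rw [toLex_add, toLex_add] at h7
      calc toLex (deltaF k) + toLex dm ≤ toLex (Fl lam) + toLex (deltaF k) := h7
        _ = toLex (deltaF k) + toLex (Fl lam) := add_comm _ _
    have h8 : toLex dm ≤ toLex (Fl lam) := le_of_add_le_add_left h6
    exact le_trans (hmax d hd) h8
  have hctop : Top Pl (Fl lam) (MvPolynomial.coeff (Fl lam) Pl) := ⟨rfl, hsupp⟩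
  have h6 := (top_Vdm (k := k)).mul ((top_C lam).mul hctop)
  rw [zero_add, one_mul] at h6
  have h7 : MvPolynomial.coeff (deltaF k + Fl lam) (Np k lam) = (mulOf k lam : ℤ) := by
    have := coeff_muF_Np lam hlam
    rw [muF] at this
    rw [add_comm]
    exact this
  have h9 := h6.1
  rw [hkey, h7] at h9
  constructor
  · exact mul_left_cancel₀ hm0 (h9.symm.trans (mul_one _).symm)
  · exact hsupp

lemma C_sign_ne (τ : Equiv.Perm (Fin k)) :
    (MvPolynomial.C ((Equiv.Perm.sign τ : ℤ)) : Rk) ≠ 0 := by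
  intro h
  have h2 : ((Equiv.Perm.sign τ : ℤ)) = 0 :=
    MvPolynomial.C_injective (Fin k) ℤ (h.trans (map_zero _).symm)
  have := sign_mul_self (k := k) τ
  rw [h2, mul_zero] at this
  exact zero_ne_one this

lemma P_symmetric (Pl : Rk)
    (hkey : Vdm k * (MvPolynomial.C (mulOf k lam : ℤ) * Pl) = Np k lam) :
    Pl.IsSymmetric := by
  classical
  intro τ
  have hm0 : (mulOf k lam : ℤ) ≠ 0 := by
    exact_mod_cast (mulOf_pos (k := k) lam).ne'
  have h1 := congrArg (MvPolynomial.rename ⇑τ) hkey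
  rw [map_mul, map_mul, MvPolynomial.rename_C, rename_Vdm, rename_Np,
    MvPolynomial.smul_eq_C_mul, ← hkey] at h1
  have h2 : (MvPolynomial.C ((Equiv.Perm.sign τ : ℤ)) * Vdm k * MvPolynomial.C (mulOf k lam : ℤ))
        * MvPolynomial.rename ⇑τ Pl
      = (MvPolynomial.C ((Equiv.Perm.sign τ : ℤ)) * Vdm k * MvPolynomial.C (mulOf k lam : ℤ)) * Pl := by
    linear_combination h1
  have h3 : (MvPolynomial.C ((Equiv.Perm.sign τ : ℤ)) * Vdm k
      * MvPolynomial.C (mulOf k lam : ℤ) : Rk) ≠ 0 :=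
    mul_ne_zero (mul_ne_zero (C_sign_ne τ) Vdm_ne_zero)
      (fun h => hm0 (MvPolynomial.C_injective (Fin k) ℤ (h.trans (map_zero _).symm)))
  exact mul_left_cancel₀ h3 h2

end PFacts

section Assemble

open MvPolynomial

lemma linearIndependent_of_top {I : Type*} (F : I → (Fin k →₀ ℕ)) (hFinj : Function.Injective F)
    (v : I → MvPolynomial (Fin k) ℤ)
    (htop : ∀ i, MvPolynomial.coeff (F i) (v i) = 1 ∧ ∀ d ∈ (v i).support, toLex d ≤ toLex (F i)) :
    LinearIndependent ℤ v := by
  classical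
  rw [linearIndependent_iff']
  suffices H : ∀ (m : ℕ) (s : Finset I), s.card = m → ∀ g : I → ℤ,
      (∑ i ∈ s, g i • v i) = 0 → ∀ i ∈ s, g i = 0 by
    intro s g h i hi
    exact H s.card s rfl g h i hi
  intro m
  induction m with
  | zero =>
    intro s hs g _ i hi
    rw [Finset.card_eq_zero] at hs
    subst hs
    simp at hi
  | succ m IH =>
    intro s hs g hsum i hi
    have hne : s.Nonempty := ⟨i, hi⟩
    obtain ⟨im, him, hmax⟩ := Finset.exists_max_image s (fun j => toLex (F j)) hne
    have hgim : g im = 0 := by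
      have hc := congrArg (MvPolynomial.coeff (F im)) hsum
      rw [MvPolynomial.coeff_sum, MvPolynomial.coeff_zero] at hc
      have hterm : ∀ j ∈ s, MvPolynomial.coeff (F im) (g j • v j)
          = if j = im then g im else 0 := by
        intro j hj
        rw [MvPolynomial.coeff_smul, smul_eq_mul]
        split_ifs with hjm
        · subst hjm
          rw [(htop j).1, mul_one]
        · have hcz : MvPolynomial.coeff (F im) (v j) = 0 := by
            by_contra hnz
            have hmem : F im ∈ (v j).support := MvPolynomial.mem_support_iff.2 hnz
            have h1 := (htop j).2 _ hmem
            have h2 := hmax j hj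
            have h3 : toLex (F im) = toLex (F j) := le_antisymm h1 h2
            exact hjm (hFinj (toLex.injective h3.symm))
          rw [hcz, mul_zero]
      rw [Finset.sum_congr rfl hterm, Finset.sum_ite_eq' s im (fun _ => g im), if_pos him] at hc
      exact hc
    have hsum' : ∑ j ∈ s.erase im, g j • v j = 0 := by
      rw [← Finset.add_sum_erase s _ him, hgim, zero_smul, zero_add] at hsum
      exact hsum
    have hcard : (s.erase im).card = m := by
      rw [Finset.card_erase_of_mem him, hs]
      omega
    rcases eq_or_ne i im with rfl | hne2
    · exact hgim
    · exact IH (s.erase im) hcard g hsum' i (Finset.mem_erase.2 ⟨hne2, hi⟩)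

lemma span_of_top (P : {lam : Fin k → ℕ // Antitone lam} → MvPolynomial (Fin k) ℤ)
    (htop : ∀ x, MvPolynomial.coeff (Fl x.1) (P x) = 1
      ∧ ∀ d ∈ (P x).support, toLex d ≤ toLex (Fl x.1))
    (hsym : ∀ x, (P x).IsSymmetric) :
    ∀ f : MvPolynomial (Fin k) ℤ, f.IsSymmetric → f ∈ Submodule.span ℤ (Set.range P) := by
  classical
  haveI : WellFoundedLT (Lex (Fin k →₀ ℕ)) := Finsupp.Lex.wellFoundedLT_of_finite
  suffices H : ∀ D : Lex (Fin k →₀ ℕ), ∀ f : MvPolynomial (Fin k) ℤ, f.IsSymmetric →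
      (∀ e ∈ f.support, toLex e ≤ D) → f ∈ Submodule.span ℤ (Set.range P) by
    intro f hf
    by_cases hf0 : f = 0
    · rw [hf0]; exact Submodule.zero_mem _
    · obtain ⟨dm, hdm, hmax⟩ :=
        Finset.exists_max_image f.support toLex (MvPolynomial.support_nonempty.2 hf0)
      exact H (toLex dm) f hf hmax
  intro D
  induction D using WellFoundedLT.induction with
  | _ D IH =>
  intro f hf hbound
  by_cases hf0 : f = 0
  · rw [hf0]; exact Submodule.zero_mem _
  obtain ⟨dm, hdm, hmax⟩ :=
    Finset.exists_max_image f.support toLex (MvPolynomial.support_nonempty.2 hf0)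
  have hanti : Antitone (⇑dm : Fin k → ℕ) := by
    intro i j hij
    rcases eq_or_lt_of_le hij with rfl | hlt
    · exact le_refl _
    by_contra hcon
    push_neg at hcon
    set τ := Equiv.swap i j with hτ
    have hrw := MvPolynomial.coeff_rename_mapDomain ⇑τ (Equiv.injective τ) f dm
    rw [hf τ] at hrw
    have hmem : Finsupp.mapDomain ⇑τ dm ∈ f.support := by
      rw [MvPolynomial.mem_support_iff, hrw]
      exact MvPolynomial.mem_support_iff.1 hdm
    have hle := hmax _ hmem
    have happ : ∀ t, Finsupp.mapDomain ⇑τ dm t = dm (τ t) := by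
      intro t
      rw [Finsupp.mapDomain_equiv_apply, hτ, Equiv.symm_swap]
    have hgt : toLex dm < toLex (Finsupp.mapDomain ⇑τ dm) := by
      refine (⟨i, ?_, ?_⟩ : ∃ i', (∀ t, t < i' → ofLex (toLex dm) t
          = ofLex (toLex (Finsupp.mapDomain ⇑τ dm)) t) ∧
          ofLex (toLex dm) i' < ofLex (toLex (Finsupp.mapDomain ⇑τ dm)) i')
      · intro t ht
        rw [ofLex_toLex, ofLex_toLex, happ t, hτ,
          Equiv.swap_apply_of_ne_of_ne (ne_of_lt ht) (ne_of_lt (ht.trans hlt))]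
      · rw [ofLex_toLex, ofLex_toLex, happ i, hτ, Equiv.swap_apply_left]
        exact hcon
    exact absurd hle (not_le.2 hgt)
  set x : {lam : Fin k → ℕ // Antitone lam} := ⟨⇑dm, hanti⟩ with hx
  have hFl : Fl (⇑dm) = dm := Finsupp.equivFunOnFinite_symm_coe dm
  set c := MvPolynomial.coeff dm f with hc
  set g := f - c • P x with hg
  have hcoeffP : MvPolynomial.coeff dm (P x) = 1 := by
    have h1 := (htop x).1
    rw [hx] at h1
    rw [← hFl]
    exact h1
  have hPsupp : ∀ d ∈ (P x).support, toLex d ≤ toLex dm := by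
    intro d hd
    have h1 := (htop x).2 d hd
    rw [hx] at h1
    rw [← hFl]
    exact h1
  have hgsupp : ∀ e ∈ g.support, toLex e < toLex dm := by
    intro e he
    have hne0 : MvPolynomial.coeff e g ≠ 0 := MvPolynomial.mem_support_iff.1 he
    have hcoeffg : MvPolynomial.coeff e g
        = MvPolynomial.coeff e f - c * MvPolynomial.coeff e (P x) := by
      rw [hg, MvPolynomial.coeff_sub, MvPolynomial.coeff_smul, smul_eq_mul]
    have he_le : toLex e ≤ toLex dm := by
      by_cases h1 : MvPolynomial.coeff e f = 0
      · have h2 : MvPolynomial.coeff e (P x) ≠ 0 := by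
          intro h3
          rw [hcoeffg, h1, h3, mul_zero, sub_zero] at hne0
          exact hne0 rfl
        exact hPsupp e (MvPolynomial.mem_support_iff.2 h2)
      · exact hmax e (MvPolynomial.mem_support_iff.2 h1)
    have he_ne : e ≠ dm := by
      intro h1
      subst h1
      rw [hcoeffg, hcoeffP, mul_one, sub_self] at hne0
      exact hne0 rfl
    exact lt_of_le_of_ne he_le (fun h => he_ne (toLex.injective h))
  have hgsym : g.IsSymmetric := by
    intro τ
    rw [hg, map_sub, MvPolynomial.smul_eq_C_mul, map_mul, MvPolynomial.rename_C, hf τ, hsym x τ,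
      ← MvPolynomial.smul_eq_C_mul]
  have hspanP : P x ∈ Submodule.span ℤ (Set.range P) :=
    Submodule.subset_span (Set.mem_range_self x)
  have hfg : f = g + c • P x := by rw [hg]; ring
  by_cases hg0 : g = 0
  · rw [hfg, hg0, zero_add]
    exact Submodule.smul_mem _ _ hspanP
  · obtain ⟨em, hem, hemax⟩ :=
      Finset.exists_max_image g.support toLex (MvPolynomial.support_nonempty.2 hg0)
    have hlt : toLex em < D := lt_of_lt_of_le (hgsupp em hem) (hbound dm hdm)
    have hginspan := IH (toLex em) hlt g hgsym hemax
    rw [hfg]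
    exact Submodule.add_mem _ hginspan (Submodule.smul_mem _ _ hspanP)

end Assemble

end HLaux

open HLaux in
/-- for every `k`, the family of Hall–Littlewood polynomials `P_λ`, indexed by
the partitions `λ` of length `k` (i.e. antitone tuples `λ : Fin k → ℕ`) and characterized by
`mul(λ)·P_λ = hlSum λ` in the fraction field, is a basis of the ℤ-module of symmetric
polynomials in `ℤ[x_1,…,x_k]`: it is linearly independent over ℤ and every symmetric
polynomial with integer coefficients is a ℤ-linear combination of the `P_λ`. -/
theorem stmt_4 (k : ℕ)
    (P : {lam : Fin k → ℕ // Antitone lam} → MvPolynomial (Fin k) ℤ)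
    (hP : ∀ lam : {lam : Fin k → ℕ // Antitone lam},
      hlSum k lam.1
        = (mulOf k lam.1 : FractionRing (MvPolynomial (Fin k) ℤ)) *
            algebraMap (MvPolynomial (Fin k) ℤ) (FractionRing (MvPolynomial (Fin k) ℤ)) (P lam)) :
    LinearIndependent ℤ P ∧
      ∀ f : MvPolynomial (Fin k) ℤ, f.IsSymmetric → f ∈ Submodule.span ℤ (Set.range P) := by
  classical
  have hkey : ∀ x : {lam : Fin k → ℕ // Antitone lam},
      Vdm k * (MvPolynomial.C (mulOf k x.1 : ℤ) * P x) = Np k x.1 :=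
    fun x => key_poly x.1 (P x) (hP x)
  have htop : ∀ x : {lam : Fin k → ℕ // Antitone lam},
      MvPolynomial.coeff (Fl x.1) (P x) = 1
        ∧ ∀ d ∈ (P x).support, toLex d ≤ toLex (Fl x.1) :=
    fun x => P_top x.1 x.2 (P x) (hkey x)
  have hsym : ∀ x, (P x).IsSymmetric := fun x => P_symmetric x.1 (P x) (hkey x)
  constructor
  · apply linearIndependent_of_top (fun x : {lam : Fin k → ℕ // Antitone lam} => Fl x.1)
      (fun x y hxy => Subtype.ext (Finsupp.equivFunOnFinite.symm.injective hxy)) P htop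
  · exact span_of_top P htop hsym
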